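/- For u, v in S^m (fuzzy star-shaped numbers with compact support), if d_p(u,v) = 0 then [u]_α = [v]_α for almost every α ∈ (0,1], and hence (using left-continuity of α ↦ [u]_α in the Hausdorff metric) u = v. -/

import Mathlib

open Set Metric MeasureTheory

def cut {m : ℕ} (u : EuclideanSpace ℝ (Fin m) → ℝ) (α : ℝ) :
    Set (EuclideanSpace ℝ (Fin m)) := {x | α ≤ u x}

/-- `u` is a fuzzy star-shaped number with compact support (`u ∈ Sᵐ`). -/
def IsFSN {m : ℕ} (u : EuclideanSpace ℝ (Fin m) → ℝ) : Prop :=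
  (∀ x, u x ∈ Set.Icc (0:ℝ) 1) ∧ (∃ x, u x = 1) ∧ UpperSemicontinuous u ∧
  (∀ α ∈ Set.Ioc (0:ℝ) 1, ∃ x ∈ cut u α, StarConvex ℝ x (cut u α)) ∧
  IsCompact (closure {x | 0 < u x})

/-- The `L_p` distance between fuzzy sets via Hausdorff distance of level cuts. -/
noncomputable def dp {m : ℕ} (p : ℝ) (u v : EuclideanSpace ℝ (Fin m) → ℝ) : ℝ :=
  (∫ α in Set.Ioc (0:ℝ) 1, hausdorffDist (cut u α) (cut v α) ^ p) ^ (1/p)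

section Aux

variable {m : ℕ} {u v : EuclideanSpace ℝ (Fin m) → ℝ} {α β : ℝ}

lemma cut_antitone (hβα : β ≤ α) : cut u α ⊆ cut u β :=
  fun _ hx => le_trans hβα hx

lemma cut_subset_support (hα : 0 < α) :
    cut u α ⊆ closure {x | 0 < u x} :=
  fun _ hx => subset_closure (lt_of_lt_of_le hα hx)

lemma cut_isClosed (hu : IsFSN u) (α : ℝ) : IsClosed (cut u α) :=
  upperSemicontinuous_iff_isClosed_preimage.1 hu.2.2.1 α

lemma cut_nonempty (hu : IsFSN u) (hα : α ≤ 1) : (cut u α).Nonempty := by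
  obtain ⟨x, hx⟩ := hu.2.1
  exact ⟨x, by simpa [cut, hx] using hα⟩

lemma cut_isCompact (hu : IsFSN u) (hα : 0 < α) : IsCompact (cut u α) :=
  hu.2.2.2.2.of_isClosed_subset (cut_isClosed hu α) (cut_subset_support hα)

lemma cut_isBounded (hu : IsFSN u) (hα : 0 < α) :
    Bornology.IsBounded (cut u α) :=
  (cut_isCompact hu hα).isBounded

lemma hEdist_ne_top (hu : IsFSN u) (hv : IsFSN v)
    (hα : α ∈ Set.Ioc (0:ℝ) 1) (hβ : β ∈ Set.Ioc (0:ℝ) 1) :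
    EMetric.hausdorffEdist (cut u α) (cut v β) ≠ ⊤ :=
  hausdorffEdist_ne_top_of_nonempty_of_bounded (cut_nonempty hu hα.2)
    (cut_nonempty hv hβ.2) (cut_isBounded hu hα.1) (cut_isBounded hv hβ.1)

/-- Key approximation: cuts from slightly below are inside a thickening. -/
lemma exists_lt_cut_subset_thickening (hu : IsFSN u)
    (hα : α ∈ Set.Ioc (0:ℝ) 1) {ε : ℝ} (hε : 0 < ε) :
    ∃ β ∈ Set.Ioo (0:ℝ) α, cut u β ⊆ thickening ε (cut u α) := by
  by_contra hcon
  push_neg at hcon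
  set T := thickening ε (cut u α) with hT
  set β : ℕ → ℝ := fun n => α - α / (n + 2) with hβ
  have hn2 : ∀ n : ℕ, (0:ℝ) < (n:ℝ) + 2 := by
    intro n; have := Nat.cast_nonneg (α := ℝ) n; linarith
  have hβmem : ∀ n, β n ∈ Set.Ioo (0:ℝ) α := by
    intro n
    constructor
    · have h1 : α / ((n:ℝ) + 2) < α := by
        apply div_lt_self hα.1
        have := Nat.cast_nonneg (α := ℝ) n; linarith
      simpa [hβ] using by linarith
    · have : 0 < α / ((n:ℝ) + 2) := div_pos hα.1 (hn2 n)
      simp only [hβ]; linarith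
  set C : ℕ → Set (EuclideanSpace ℝ (Fin m)) := fun n => cut u (β n) ∩ Tᶜ with hC
  have hCne : ∀ n, (C n).Nonempty := by
    intro n
    obtain ⟨x, hx1, hx2⟩ := Set.not_subset.1 (hcon (β n) (hβmem n))
    exact ⟨x, hx1, hx2⟩
  have hCcl : ∀ n, IsClosed (C n) := fun n =>
    (cut_isClosed hu _).inter (isOpen_thickening.isClosed_compl)
  have hmono : ∀ n, β n ≤ β (n + 1) := by
    intro n
    have h1 : ((n:ℝ)) + 2 ≤ ((n:ℝ) + 1) + 2 := by linarith
    have := div_le_div_of_nonneg_left hα.1.le (hn2 n) h1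
    simp only [hβ]
    push_cast
    have h2 : α / ((n:ℝ) + 1 + 2) ≤ α / ((n:ℝ) + 2) :=
      div_le_div_of_nonneg_left hα.1.le (hn2 n) h1
    linarith
  have hCmono : ∀ n, C (n + 1) ⊆ C n := fun n =>
    Set.inter_subset_inter_left _ (cut_antitone (hmono n))
  have hC0 : IsCompact (C 0) :=
    (cut_isCompact hu (hβmem 0).1).of_isClosed_subset (hCcl 0) Set.inter_subset_left
  obtain ⟨x, hx⟩ := IsCompact.nonempty_iInter_of_sequence_nonempty_isCompact_isClosed
    C hCmono hCne hC0 hCcl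
  have hxall : ∀ n, β n ≤ u x := fun n => ((Set.mem_iInter.1 hx n).1 : _)
  have hβtendsto : Filter.Tendsto β Filter.atTop (nhds α) := by
    have h1 : Filter.Tendsto (fun n : ℕ => α / ((n:ℝ) + 2)) Filter.atTop (nhds 0) := by
      apply Filter.Tendsto.div_atTop (tendsto_const_nhds)
      exact Filter.tendsto_atTop_add_const_right _ 2 tendsto_natCast_atTop_atTop
    have := Filter.Tendsto.sub (tendsto_const_nhds (x := α) (f := Filter.atTop (α := ℕ))) h1
    simpa [hβ] using this
  have hxα : α ≤ u x := le_of_tendsto hβtendsto (Filter.Eventually.of_forall hxall)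
  have : x ∈ T := self_subset_thickening hε _ hxα
  exact (Set.mem_iInter.1 hx 0).2 this

lemma hd_cut_le (hβ : β ∈ Set.Ioo (0:ℝ) α) {ε : ℝ} (hε : 0 < ε)
    (hsub : cut u β ⊆ thickening ε (cut u α)) :
    hausdorffDist (cut u β) (cut u α) ≤ ε := by
  have h1 : EMetric.hausdorffEdist (cut u β) (cut u α) ≤ ENNReal.ofReal ε := by
    apply EMetric.hausdorffEdist_le_of_infEdist
    · exact fun x hx => le_of_lt (mem_thickening_iff_infEdist_lt.1 (hsub hx))
    · intro x hx
      rw [EMetric.infEdist_zero_of_mem (cut_antitone hβ.2.le hx)]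
      exact zero_le
  exact ENNReal.toReal_le_of_le_ofReal hε.le h1

end Aux
section Cont

variable {m : ℕ} {u v : EuclideanSpace ℝ (Fin m) → ℝ} {α β : ℝ}

lemma abs_hd_sub_le (hu : IsFSN u) (hv : IsFSN v)
    (hα : α ∈ Set.Ioc (0:ℝ) 1) (hβ : β ∈ Set.Ioo (0:ℝ) α) :
    |hausdorffDist (cut u β) (cut v β) - hausdorffDist (cut u α) (cut v α)| ≤
      hausdorffDist (cut u β) (cut u α) + hausdorffDist (cut v β) (cut v α) := by
  have hβ1 : β ∈ Set.Ioc (0:ℝ) 1 := ⟨hβ.1, le_trans hβ.2.le hα.2⟩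
  have f1 := hEdist_ne_top hu hu hβ1 hα
  have f2 := hEdist_ne_top hu hv hα hα
  have f3 := hEdist_ne_top hu hv hα hβ1
  have f4 := hEdist_ne_top hu hu hα hβ1
  have f5 := hEdist_ne_top hu hv hβ1 hβ1
  have h1 : hausdorffDist (cut u β) (cut v β) ≤
      hausdorffDist (cut u β) (cut u α) + hausdorffDist (cut u α) (cut v β) :=
    hausdorffDist_triangle f1
  have h2 : hausdorffDist (cut u α) (cut v β) ≤
      hausdorffDist (cut u α) (cut v α) + hausdorffDist (cut v α) (cut v β) :=
    hausdorffDist_triangle f2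
  have h3 : hausdorffDist (cut u α) (cut v α) ≤
      hausdorffDist (cut u α) (cut u β) + hausdorffDist (cut u β) (cut v α) :=
    hausdorffDist_triangle (by rw [hausdorffEDist_comm]; exact f1)
  have h4 : hausdorffDist (cut u β) (cut v α) ≤
      hausdorffDist (cut u β) (cut v β) + hausdorffDist (cut v β) (cut v α) :=
    hausdorffDist_triangle f5
  rw [abs_sub_le_iff]
  constructor
  · have := hausdorffDist_comm (s := cut v α) (t := cut v β)
    linarith [hausdorffDist_comm (s := cut v α) (t := cut v β)]
  · linarith [hausdorffDist_comm (s := cut u α) (t := cut u β)]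

lemma tendsto_hd (hu : IsFSN u) (hv : IsFSN v) (hα : α ∈ Set.Ioc (0:ℝ) 1) :
    Filter.Tendsto
      (fun n : ℕ => hausdorffDist
        (cut u (((⌈((n:ℝ)+1) * α⌉ : ℤ) - 1) / ((n:ℝ)+1)))
        (cut v (((⌈((n:ℝ)+1) * α⌉ : ℤ) - 1) / ((n:ℝ)+1))))
      Filter.atTop (nhds (hausdorffDist (cut u α) (cut v α))) := by
  rw [Metric.tendsto_atTop]
  intro ε hε
  have hε3 : 0 < ε / 3 := by linarith
  obtain ⟨βu, hβu, hsubu⟩ := exists_lt_cut_subset_thickening hu hα hε3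
  obtain ⟨βv, hβv, hsubv⟩ := exists_lt_cut_subset_thickening hv hα hε3
  set β₀ : ℝ := max βu βv with hβ₀def
  have hβ₀ : β₀ ∈ Set.Ioo (0:ℝ) α := ⟨lt_max_of_lt_left hβu.1, max_lt hβu.2 hβv.2⟩
  obtain ⟨N, hN⟩ := exists_nat_one_div_lt (ε := α - β₀) (by linarith [hβ₀.2])
  refine ⟨N, fun n hn => ?_⟩
  set γ : ℝ := ((⌈((n:ℝ)+1) * α⌉ : ℤ) - 1) / ((n:ℝ)+1) with hγdef
  have hnpos : (0:ℝ) < (n:ℝ) + 1 := by positivity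
  have hγlt : γ < α := by
    rw [hγdef, div_lt_iff₀ hnpos]
    have := Int.ceil_lt_add_one (((n:ℝ)+1) * α)
    push_cast
    linarith [Int.ceil_lt_add_one (((n:ℝ)+1) * α), mul_comm ((n:ℝ)+1) α]
  have hγge : α - 1 / ((n:ℝ)+1) ≤ γ := by
    rw [hγdef, le_div_iff₀ hnpos, sub_mul]
    have := Int.le_ceil (((n:ℝ)+1) * α)
    push_cast
    have h2 : (α - 1 / ((n:ℝ)+1)) * ((n:ℝ)+1) = ((n:ℝ)+1) * α - 1 := by
      field_simp
    nlinarith [Int.le_ceil (((n:ℝ)+1) * α)]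
  have hβ₀γ : β₀ < γ := by
    have h1 : 1 / ((n:ℝ)+1) ≤ 1 / ((N:ℝ)+1) := by
      apply one_div_le_one_div_of_le (by positivity)
      have : (N:ℝ) ≤ (n:ℝ) := Nat.cast_le.2 hn
      linarith
    linarith
  have hγmem : γ ∈ Set.Ioo (0:ℝ) α := ⟨lt_trans hβ₀.1 hβ₀γ, hγlt⟩
  have hdu : hausdorffDist (cut u γ) (cut u α) ≤ ε / 3 := by
    apply hd_cut_le hγmem hε3
    exact subset_trans (cut_antitone (le_trans (le_max_left βu βv) hβ₀γ.le)) hsubu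
  have hdv : hausdorffDist (cut v γ) (cut v α) ≤ ε / 3 := by
    apply hd_cut_le hγmem hε3
    exact subset_trans (cut_antitone (le_trans (le_max_right βu βv) hβ₀γ.le)) hsubv
  have habs := abs_hd_sub_le hu hv hα hγmem
  rw [Real.dist_eq]
  calc |hausdorffDist (cut u γ) (cut v γ) - hausdorffDist (cut u α) (cut v α)|
      ≤ hausdorffDist (cut u γ) (cut u α) + hausdorffDist (cut v γ) (cut v α) := habs
    _ ≤ ε / 3 + ε / 3 := add_le_add hdu hdv
    _ < ε := by linarith

lemma hd_aemeasurable (hu : IsFSN u) (hv : IsFSN v) :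
    AEMeasurable (fun α => hausdorffDist (cut u α) (cut v α))
      (volume.restrict (Set.Ioc (0:ℝ) 1)) := by
  set g : ℕ → ℝ → ℝ := fun n α => hausdorffDist
    (cut u (((⌈((n:ℝ)+1) * α⌉ : ℤ) - 1) / ((n:ℝ)+1)))
    (cut v (((⌈((n:ℝ)+1) * α⌉ : ℤ) - 1) / ((n:ℝ)+1))) with hg
  have hmeas : ∀ n, Measurable (g n) := by
    intro n
    have : g n = (fun k : ℤ => hausdorffDist
        (cut u (((k:ℝ) - 1) / ((n:ℝ)+1))) (cut v (((k:ℝ) - 1) / ((n:ℝ)+1)))) ∘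
        (fun α : ℝ => ⌈((n:ℝ)+1) * α⌉) := by
      funext α; simp [hg]
    rw [this]
    exact Measurable.comp .of_discrete (Int.measurable_ceil.comp (measurable_id.const_mul _))
  apply aemeasurable_of_tendsto_metrizable_ae Filter.atTop
    (fun n => (hmeas n).aemeasurable)
  rw [ae_restrict_iff' measurableSet_Ioc]
  exact Filter.Eventually.of_forall (fun α hα => tendsto_hd hu hv hα)

end Cont
theorem eq_of_dp_eq_zero {m : ℕ} (p : ℝ) (hp : 1 ≤ p)
    (u v : EuclideanSpace ℝ (Fin m) → ℝ) (hu : IsFSN u) (hv : IsFSN v)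
    (h : dp p u v = 0) :
    (∀ᵐ α ∂(volume.restrict (Set.Ioc (0:ℝ) 1)), cut u α = cut v α) ∧ u = v := by
  have hp0 : (0:ℝ) < p := lt_of_lt_of_le one_pos hp
  set μr := volume.restrict (Set.Ioc (0:ℝ) 1) with hμr
  set F : ℝ → ℝ := fun γ => hausdorffDist (cut u γ) (cut v γ) with hFdef
  haveI : IsFiniteMeasure μr := by
    constructor
    rw [hμr, Measure.restrict_apply_univ, Real.volume_Ioc]
    exact ENNReal.ofReal_lt_top
  set C : ℝ := diam (closure {x | 0 < u x} ∪ closure {x | 0 < v x}) with hCdef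
  have hbound : ∀ α ∈ Set.Ioc (0:ℝ) 1, F α ≤ C := by
    intro α hα
    calc F α ≤ diam (cut u α ∪ cut v α) :=
          hausdorffDist_le_diam (cut_nonempty hu hα.2) (cut_isBounded hu hα.1)
            (cut_nonempty hv hα.2) (cut_isBounded hv hα.1)
      _ ≤ C := diam_mono
          (Set.union_subset_union (cut_subset_support hα.1) (cut_subset_support hα.1))
          ((hu.2.2.2.2.isBounded).union hv.2.2.2.2.isBounded)
  have hFae : AEMeasurable F μr := hd_aemeasurable hu hv
  have hFpae : AEMeasurable (fun α => F α ^ p) μr :=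
    (Real.continuous_rpow_const hp0.le).measurable.comp_aemeasurable hFae
  have hInt : Integrable (fun α => F α ^ p) μr := by
    refine ⟨hFpae.aestronglyMeasurable, ?_⟩
    apply HasFiniteIntegral.of_bounded (C := C ^ p)
    rw [hμr, ae_restrict_iff' measurableSet_Ioc]
    refine Filter.Eventually.of_forall (fun α hα => ?_)
    rw [Real.norm_eq_abs, abs_of_nonneg (Real.rpow_nonneg hausdorffDist_nonneg p)]
    exact Real.rpow_le_rpow hausdorffDist_nonneg (hbound α hα) hp0.le
  have hintzero : ∫ α in Set.Ioc (0:ℝ) 1, F α ^ p = 0 := by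
    have hnn : 0 ≤ ∫ α in Set.Ioc (0:ℝ) 1, F α ^ p :=
      integral_nonneg fun α => Real.rpow_nonneg hausdorffDist_nonneg p
    unfold dp at h
    exact ((Real.rpow_eq_zero_iff_of_nonneg hnn).1 h).1
  have hae0 : ∀ᵐ α ∂μr, F α ^ p = 0 := by
    have hnn : 0 ≤ᵐ[μr] fun α => F α ^ p :=
      Filter.Eventually.of_forall fun α => Real.rpow_nonneg hausdorffDist_nonneg p
    exact (integral_eq_zero_iff_of_nonneg_ae hnn hInt).1 hintzero
  have haeEq : ∀ᵐ α ∂μr, cut u α = cut v α := by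
    rw [hμr, ae_restrict_iff' measurableSet_Ioc] at hae0 ⊢
    filter_upwards [hae0] with α h1 hα
    have hF0 : F α = 0 :=
      ((Real.rpow_eq_zero_iff_of_nonneg hausdorffDist_nonneg).1 (h1 hα)).1
    exact ((cut_isClosed hu α).hausdorffDist_zero_iff_eq (cut_isClosed hv α)
      (hEdist_ne_top hu hv hα hα)).1 hF0
  refine ⟨haeEq, ?_⟩
  have hnull : volume ({α | ¬ cut u α = cut v α} ∩ Set.Ioc (0:ℝ) 1) = 0 := by
    have := haeEq
    rw [hμr] at this
    rw [ae_iff, Measure.restrict_apply' measurableSet_Ioc] at this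
    exact this
  have hall : ∀ α ∈ Set.Ioc (0:ℝ) 1, cut u α = cut v α := by
    intro α hα
    have key : ∀ ε > (0:ℝ), ∃ β, max (α - ε) (α/2) < β ∧ β < α ∧ cut u β = cut v β := by
      intro ε hε
      by_contra hcon
      push_neg at hcon
      have hsub : Set.Ioo (max (α - ε) (α/2)) α ⊆
          {α | ¬ cut u α = cut v α} ∩ Set.Ioc (0:ℝ) 1 := by
        intro β hβ
        refine ⟨hcon β hβ.1 hβ.2, ?_, le_trans hβ.2.le hα.2⟩
        exact lt_of_le_of_lt (le_trans (by linarith [hα.1] : (0:ℝ) ≤ α/2)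
          (le_max_right _ _)) hβ.1
      have h0 := measure_mono_null hsub hnull
      rw [Real.volume_Ioo] at h0
      have hlt : max (α - ε) (α/2) < α := max_lt (by linarith) (by linarith [hα.1])
      rw [ENNReal.ofReal_eq_zero] at h0
      linarith
    ext x
    simp only [cut, Set.mem_setOf_eq]
    constructor
    · intro hx
      by_contra hvx
      push_neg at hvx
      obtain ⟨β, hβ1, hβ2, hβeq⟩ := key (α - v x) (by linarith)
      have hxβ : x ∈ cut u β := le_trans hβ2.le hx
      rw [hβeq] at hxβ
      have h1 : α - (α - v x) < β := lt_of_le_of_lt (le_max_left _ _) hβ1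
      have h2 : β ≤ v x := hxβ
      simp only [sub_sub_cancel] at h1
      linarith
    · intro hx
      by_contra hux
      push_neg at hux
      obtain ⟨β, hβ1, hβ2, hβeq⟩ := key (α - u x) (by linarith)
      have hxβ : x ∈ cut v β := le_trans hβ2.le hx
      rw [← hβeq] at hxβ
      have h1 : α - (α - u x) < β := lt_of_le_of_lt (le_max_left _ _) hβ1
      have h2 : β ≤ u x := hxβ
      simp only [sub_sub_cancel] at h1
      linarith
  funext x
  have h01u := hu.1 x
  have h01v := hv.1 x
  apply le_antisymm
  · rcases le_or_gt (u x) 0 with hle | hlt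
    · exact le_trans hle h01v.1
    · have hmem : u x ∈ Set.Ioc (0:ℝ) 1 := ⟨hlt, h01u.2⟩
      have hx : x ∈ cut u (u x) := by simp [cut]
      rw [hall _ hmem] at hx
      exact hx
  · rcases le_or_gt (v x) 0 with hle | hlt
    · exact le_trans hle h01u.1
    · have hmem : v x ∈ Set.Ioc (0:ℝ) 1 := ⟨hlt, h01v.2⟩
      have hx : x ∈ cut v (v x) := by simp [cut]
      rw [← hall _ hmem] at hx
      exact hx
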